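/- Let Ẋ = XU + GX + DX − XD, X̂̇ = X̂U + GX̂ + DX̂ − X̂D + Z(Δ)Z⁻¹ X̂, and Ż = (G+D)Z − ZΓ, where X, X̂ ∈ SE₂(3), Z ∈ SIM₂(3), Δ ∈ 𝔰𝔢₂(3), Γ ∈ 𝔰𝔦𝔪₂(3), and G, D are fixed matrices. Then the error Ē := Z⁻¹ X X̂⁻¹ Z satisfies Ē̇ = ΓĒ − ĒΓ − ĒΔ. In particular, when Δ = 0 and Γ = 0 the error Ē is stationary. -/

import Mathlib

open Matrix

noncomputable section

/-- Index type for 5×5 block matrices with blocks of sizes 3 and 2. -/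
abbrev Idx : Type := Fin 3 ⊕ Fin 2

/-- The 3×3 skew-symmetric matrix `Ω^×` of a vector `Ω ∈ ℝ³`. -/
def skew (Ω : Fin 3 → ℝ) : Matrix (Fin 3) (Fin 3) ℝ :=
  !![0, -Ω 2, Ω 1; Ω 2, 0, -Ω 0; -Ω 1, Ω 0, 0]

/-- Membership in the special orthogonal group SO(3). -/
def SO3 (R : Matrix (Fin 3) (Fin 3) ℝ) : Prop := Rᵀ * R = 1 ∧ R.det = 1

/-- The block matrix `[[R, V], [0, A]]`. -/
def mkAff (R : Matrix (Fin 3) (Fin 3) ℝ) (V : Matrix (Fin 3) (Fin 2) ℝ)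
    (A : Matrix (Fin 2) (Fin 2) ℝ) : Matrix Idx Idx ℝ := fromBlocks R V 0 A

/-- Membership in the extended similarity group SIM₂(3). -/
def inSIM23 (Z : Matrix Idx Idx ℝ) : Prop :=
  ∃ R V A, SO3 R ∧ IsUnit A.det ∧ Z = mkAff R V A

/-- Membership in the extended special Euclidean group SE₂(3). -/
def inSE23 (X : Matrix Idx Idx ℝ) : Prop :=
  ∃ R V, SO3 R ∧ X = mkAff R V 1

/-- The Lie algebra element `[[Ω^×, W], [0, S]]`. -/
def mkAlg (Ω : Fin 3 → ℝ) (W : Matrix (Fin 3) (Fin 2) ℝ)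
    (S : Matrix (Fin 2) (Fin 2) ℝ) : Matrix Idx Idx ℝ := fromBlocks (skew Ω) W 0 S

/-- The 3×2 matrix with columns `a` and `b`. -/
def two (a b : Fin 3 → ℝ) : Matrix (Fin 3) (Fin 2) ℝ := Matrix.of fun i j => ![a i, b i] j

attribute [local instance] Matrix.normedAddCommGroup Matrix.normedSpace



lemma entry_hasDerivAt {A : ℝ → Matrix Idx Idx ℝ} {A' : Matrix Idx Idx ℝ} {t : ℝ}
    (h : HasDerivAt A A' t) (i j : Idx) :
    HasDerivAt (fun s => A s i j) (A' i j) t :=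
  hasDerivAt_pi.1 (hasDerivAt_pi.1 h i) j

lemma matmul_hasDerivAt {A B : ℝ → Matrix Idx Idx ℝ} {A' B' : Matrix Idx Idx ℝ} {t : ℝ}
    (hA : HasDerivAt A A' t) (hB : HasDerivAt B B' t) :
    HasDerivAt (fun s => A s * B s) (A' * B t + A t * B') t := by
  apply hasDerivAt_pi.2; intro i; apply hasDerivAt_pi.2; intro j
  simp only [Matrix.mul_apply, Matrix.add_apply]
  rw [← Finset.sum_add_distrib]
  exact HasDerivAt.fun_sum fun k _ =>
    ((entry_hasDerivAt hA i k).mul (entry_hasDerivAt hB k j))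

lemma det_differentiableAt {A : ℝ → Matrix Idx Idx ℝ} {t : ℝ}
    (h : ∀ i j, DifferentiableAt ℝ (fun s => A s i j) t) :
    DifferentiableAt ℝ (fun s => (A s).det) t := by
  simp only [Matrix.det_apply']
  exact DifferentiableAt.fun_sum fun σ _ =>
    ((DifferentiableAt.fun_finsetProd fun i _ => h (σ i) i).const_mul _)

lemma inv_differentiableAt {A : ℝ → Matrix Idx Idx ℝ} {A' : Matrix Idx Idx ℝ} {t : ℝ}
    (hA : HasDerivAt A A' t) (hdet : IsUnit ((A t).det)) :
    DifferentiableAt ℝ (fun s => (A s)⁻¹) t := by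
  have hent : ∀ i j, DifferentiableAt ℝ (fun s => A s i j) t :=
    fun i j => (entry_hasDerivAt hA i j).differentiableAt
  have hd : DifferentiableAt ℝ (fun s => (A s).det) t := det_differentiableAt hent
  have hadj : ∀ i j, DifferentiableAt ℝ (fun s => (A s).adjugate i j) t := by
    intro i j
    simp only [Matrix.adjugate_apply]
    refine det_differentiableAt fun k l => ?_
    simp only [Matrix.updateRow_apply]
    by_cases hk : k = j <;> simp [hk, hent]
  have hdet0 : (A t).det ≠ 0 := by
    intro h0; rw [h0] at hdet; simpa using hdet.ne_zero
  have : DifferentiableAt ℝ (fun s => ((A s).det)⁻¹ • (A s).adjugate) t := by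
    refine DifferentiableAt.smul (hd.inv hdet0) ?_
    exact differentiableAt_pi.2 fun i => differentiableAt_pi.2 fun j => hadj i j
  refine this.congr_of_eventuallyEq (Filter.Eventually.of_forall fun s => ?_)
  show (A s)⁻¹ = _
  rw [Matrix.inv_def, Ring.inverse_eq_inv']

lemma inv_hasDerivAt {A : ℝ → Matrix Idx Idx ℝ} {A' : Matrix Idx Idx ℝ} {t : ℝ}
    (hA : HasDerivAt A A' t) (hdet : ∀ s, IsUnit ((A s).det)) :
    HasDerivAt (fun s => (A s)⁻¹) (-((A t)⁻¹ * A' * (A t)⁻¹)) t := by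
  have hB : HasDerivAt (fun s => (A s)⁻¹) (deriv (fun s => (A s)⁻¹) t) t :=
    (inv_differentiableAt hA (hdet t)).hasDerivAt
  set B' := deriv (fun s => (A s)⁻¹) t with hB'
  have hconst : (fun s => A s * (A s)⁻¹) = fun _ => (1 : Matrix Idx Idx ℝ) :=
    funext fun s => Matrix.mul_nonsing_inv _ (hdet s)
  have h0 : HasDerivAt (fun s => A s * (A s)⁻¹) 0 t := by
    rw [hconst]; exact hasDerivAt_const t 1
  have h1 : HasDerivAt (fun s => A s * (A s)⁻¹) (A' * (A t)⁻¹ + A t * B') t :=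
    matmul_hasDerivAt hA hB
  have h2 : A' * (A t)⁻¹ + A t * B' = 0 := h1.unique h0
  have h3 : A t * B' = -(A' * (A t)⁻¹) := by linear_combination (norm := abel) h2
  have h4 : B' = -((A t)⁻¹ * A' * (A t)⁻¹) := by
    have h5 := congrArg (fun M => (A t)⁻¹ * M) h3
    simp only [← Matrix.mul_assoc, Matrix.nonsing_inv_mul _ (hdet t), Matrix.one_mul,
      Matrix.mul_neg] at h5
    rw [h5]
  rwa [h4] at hB


lemma se23_det_isUnit {X : Matrix Idx Idx ℝ} (h : inSE23 X) : IsUnit X.det := by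
  obtain ⟨R, V, ⟨hRT, hRdet⟩, rfl⟩ := h
  simp [mkAff, Matrix.det_fromBlocks_zero₂₁, hRdet]

lemma sim23_det_isUnit {Z : Matrix Idx Idx ℝ} (h : inSIM23 Z) : IsUnit Z.det := by
  obtain ⟨R, V, A, ⟨hRT, hRdet⟩, hA, rfl⟩ := h
  simpa [mkAff, Matrix.det_fromBlocks_zero₂₁, hRdet] using hA

/-- synchronous error dynamics. With the observer architecture as stated, the
error `Ē = Z⁻¹ X X̂⁻¹ Z` satisfies `Ē̇ = ΓĒ − ĒΓ − ĒΔ`; in particular it is stationary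
when `Δ = 0` and `Γ = 0`. -/
theorem synchronous_error_dynamics
    (X Xh Z U G D Γ Δ : ℝ → Matrix Idx Idx ℝ)
    (hXse : ∀ t, inSE23 (X t)) (hXhse : ∀ t, inSE23 (Xh t)) (hZsim : ∀ t, inSIM23 (Z t))
    (hΔalg : ∀ t, ∃ Ω W, Δ t = mkAlg Ω W 0)
    (hΓalg : ∀ t, ∃ Ω W S, Γ t = mkAlg Ω W S)
    (hX : ∀ t, HasDerivAt X (X t * U t + G t * X t + D t * X t - X t * D t) t)
    (hXh : ∀ t, HasDerivAt Xh (Xh t * U t + G t * Xh t + D t * Xh t - Xh t * D t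
        + Z t * Δ t * (Z t)⁻¹ * Xh t) t)
    (hZ : ∀ t, HasDerivAt Z ((G t + D t) * Z t - Z t * Γ t) t) :
    (∀ t, HasDerivAt (fun s => (Z s)⁻¹ * X s * (Xh s)⁻¹ * Z s)
        (Γ t * ((Z t)⁻¹ * X t * (Xh t)⁻¹ * Z t)
          - ((Z t)⁻¹ * X t * (Xh t)⁻¹ * Z t) * Γ t
          - ((Z t)⁻¹ * X t * (Xh t)⁻¹ * Z t) * Δ t) t) ∧
    ((∀ t, Δ t = 0) → (∀ t, Γ t = 0) →
      ∀ t, HasDerivAt (fun s => (Z s)⁻¹ * X s * (Xh s)⁻¹ * Z s) 0 t) := by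
  have hdX : ∀ s, IsUnit ((X s).det) := fun s => se23_det_isUnit (hXse s)
  have hdXh : ∀ s, IsUnit ((Xh s).det) := fun s => se23_det_isUnit (hXhse s)
  have hdZ : ∀ s, IsUnit ((Z s).det) := fun s => sim23_det_isUnit (hZsim s)
  have main : ∀ t, HasDerivAt (fun s => (Z s)⁻¹ * X s * (Xh s)⁻¹ * Z s)
      (Γ t * ((Z t)⁻¹ * X t * (Xh t)⁻¹ * Z t)
        - ((Z t)⁻¹ * X t * (Xh t)⁻¹ * Z t) * Γ t
        - ((Z t)⁻¹ * X t * (Xh t)⁻¹ * Z t) * Δ t) t := by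
    intro t
    have hZi := inv_hasDerivAt (hZ t) hdZ
    have hXhi := inv_hasDerivAt (hXh t) hdXh
    have h3 := matmul_hasDerivAt (matmul_hasDerivAt (matmul_hasDerivAt hZi (hX t)) hXhi) (hZ t)
    convert h3 using 1
    have e1 : (Z t)⁻¹ * Z t = 1 := Matrix.nonsing_inv_mul _ (hdZ t)
    have e2 : Z t * (Z t)⁻¹ = 1 := Matrix.mul_nonsing_inv _ (hdZ t)
    have e3 : (Xh t)⁻¹ * Xh t = 1 := Matrix.nonsing_inv_mul _ (hdXh t)
    have e4 : Xh t * (Xh t)⁻¹ = 1 := Matrix.mul_nonsing_inv _ (hdXh t)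
    have f1 : ∀ M : Matrix Idx Idx ℝ, (Z t)⁻¹ * (Z t * M) = M := by
      intro M; rw [← Matrix.mul_assoc, e1, Matrix.one_mul]
    have f2 : ∀ M : Matrix Idx Idx ℝ, Z t * ((Z t)⁻¹ * M) = M := by
      intro M; rw [← Matrix.mul_assoc, e2, Matrix.one_mul]
    have f3 : ∀ M : Matrix Idx Idx ℝ, (Xh t)⁻¹ * (Xh t * M) = M := by
      intro M; rw [← Matrix.mul_assoc, e3, Matrix.one_mul]
    have f4 : ∀ M : Matrix Idx Idx ℝ, Xh t * ((Xh t)⁻¹ * M) = M := by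
      intro M; rw [← Matrix.mul_assoc, e4, Matrix.one_mul]
    simp only [Matrix.mul_add, Matrix.add_mul, Matrix.mul_sub, Matrix.sub_mul,
      Matrix.neg_mul, Matrix.mul_neg, Matrix.mul_assoc, e1, e2, e3, e4, f1, f2, f3, f4,
      Matrix.mul_one, Matrix.one_mul]
    abel
  refine ⟨main, fun hΔ hΓ t => ?_⟩
  simpa [hΔ t, hΓ t] using main t
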